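/- arXiv:1411.2890 — 4 statements merged into one kernel-verified Lean document; each statement's English description precedes it below -/
import Mathlib

section
/- If E₀, E₁ are i.i.d. exponentially distributed random variables with mean Ē > 0 and Γ > 0, then E[max(1/2 - E₀/(2Γ), 1 - (E₀+E₁)/(2Γ), 0)] = (1 - Ē/Γ) + (Ē/(2Γ))e^{-Γ/Ē} + (1/2 + Ē/(2Γ))e^{-2Γ/Ē}. -/
open MeasureTheory ProbabilityTheory Real Filter Set
open scoped ENNReal NNReal

lemma linExp {r : ℝ} (hr : r ≠ 0) (c d a b : ℝ) :
    ∫ x in a..b, (r * Real.exp (-(r*x))) * (c + d*x)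
      = (-(c + d*b + d/r)) * Real.exp (-(r*b)) - (-(c + d*a + d/r)) * Real.exp (-(r*a)) := by
  have F : ∀ x : ℝ, HasDerivAt (fun x => (-(c + d*x + d/r)) * Real.exp (-(r*x)))
      ((r * Real.exp (-(r*x))) * (c + d*x)) x := by
    intro x
    have h1 : HasDerivAt (fun x : ℝ => -(c + d*x + d/r)) (-d) x := by
      simpa using ((((hasDerivAt_id x).const_mul d).const_add c).add_const (d/r)).fun_neg
    have h2 : HasDerivAt (fun x : ℝ => Real.exp (-(r*x))) (Real.exp (-(r*x)) * (-r)) x := by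
      simpa using (((hasDerivAt_id x).const_mul r).neg).exp
    refine (h1.fun_mul h2).congr_deriv ?_
    linear_combination (Real.exp (-(r*x))) * div_mul_cancel₀ d hr
  rw [intervalIntegral.integral_eq_sub_of_hasDerivAt (fun x _ => F x)
    ((Continuous.mul (by fun_prop) (by fun_prop)).intervalIntegrable a b)]

lemma tailExp {r : ℝ} (hr : 0 < r) (T : ℝ) :
    ∫ x in Ioi T, r * Real.exp (-(r*x)) = Real.exp (-(r*T)) := by
  have := MeasureTheory.integral_Ioi_of_hasDerivAt_of_tendsto
    (f := fun x : ℝ => -Real.exp (-(r*x))) (f' := fun x => r * Real.exp (-(r*x))) (a := T) (m := 0)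
    ((by fun_prop : Continuous fun x : ℝ => -Real.exp (-(r*x))).continuousWithinAt) (fun x _ => ProbabilityTheory.hasDerivAt_neg_exp_mul_exp)
    (by simpa [neg_mul, IntegrableOn] using (exp_neg_integrableOn_Ioi T hr).const_mul r)
    ?_
  · simpa using this
  · have h1 : Tendsto (fun x : ℝ => -(r*x)) atTop atBot := by
      refine tendsto_neg_atBot_iff.mpr ?_
      exact Tendsto.const_mul_atTop hr tendsto_id
    simpa using (Real.tendsto_exp_atBot.comp h1).neg

lemma exponentialPDFReal_eq' (r x : ℝ) :
    exponentialPDFReal r x = if 0 ≤ x then r * Real.exp (-(r*x)) else 0 := by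
  rw [exponentialPDFReal, gammaPDFReal]
  simp only [rpow_one, Real.Gamma_one, div_one, sub_self, rpow_zero, mul_one]

lemma integral_expMeasure_eq {r : ℝ} (hr : 0 < r) (g : ℝ → ℝ) :
    ∫ y, g y ∂(expMeasure r) = ∫ y in Ioi 0, (r * Real.exp (-(r*y))) * g y := by
  have hm : Measurable fun y : ℝ => (exponentialPDFReal r y).toNNReal :=
    (measurable_exponentialPDFReal r).real_toNNReal
  have hmeq : expMeasure r
      = volume.withDensity (fun y => ((exponentialPDFReal r y).toNNReal : ℝ≥0∞)) := rfl
  rw [hmeq, integral_withDensity_eq_integral_smul hm]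
  rw [← setIntegral_eq_integral_of_forall_compl_eq_zero (s := Ici 0) (fun y hy => by
    have hy' : y < 0 := not_le.mp hy
    simp [exponentialPDFReal_eq', not_le.mpr hy'])]
  rw [integral_Ici_eq_integral_Ioi]
  refine setIntegral_congr_fun measurableSet_Ioi (fun y hy => ?_)
  have : exponentialPDFReal r y = r * Real.exp (-(r*y)) := by
    rw [exponentialPDFReal_eq', if_pos (le_of_lt hy)]
  rw [NNReal.smul_def, Real.coe_toNNReal _ (exponentialPDFReal_nonneg hr y), this, smul_eq_mul]

set_option maxHeartbeats 1000000 in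
/-- For i.i.d. exponential `E₀, E₁` with mean `Ē > 0` and `Γ > 0`,
`E[max(1/2 - E₀/(2Γ), 1 - (E₀+E₁)/(2Γ), 0)]
  = (1 - Ē/Γ) + (Ē/(2Γ))e^{-Γ/Ē} + (1/2 + Ē/(2Γ))e^{-2Γ/Ē}`. -/
theorem stmt1 (Ebar Γ : ℝ) (hE : 0 < Ebar) (hΓ : 0 < Γ) :
    ∫ p : ℝ × ℝ,
        max (max (1 / 2 - p.1 / (2 * Γ)) (1 - (p.1 + p.2) / (2 * Γ))) 0
        ∂((expMeasure (1 / Ebar)).prod (expMeasure (1 / Ebar))) =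
      (1 - Ebar / Γ) + (Ebar / (2 * Γ)) * Real.exp (-(Γ / Ebar))
        + (1 / 2 + Ebar / (2 * Γ)) * Real.exp (-(2 * Γ / Ebar)) := by
  set r : ℝ := 1 / Ebar with hrdef
  have hr : 0 < r := by positivity
  have hrne : r ≠ 0 := ne_of_gt hr
  have h2Γ : (0:ℝ) < 2*Γ := by linarith
  haveI : IsProbabilityMeasure (expMeasure r) := isProbabilityMeasure_expMeasure hr
  set μ := expMeasure r with hμ
  set f : ℝ × ℝ → ℝ :=
    fun p => max (max (1 / 2 - p.1 / (2 * Γ)) (1 - (p.1 + p.2) / (2 * Γ))) 0 with hfdef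
  have hfc : Continuous f := by
    apply Continuous.max _ continuous_const
    apply Continuous.max <;> fun_prop
  -- integrability on the product
  have hmeq : μ = volume.withDensity (exponentialPDF r) := rfl
  have hneg : μ (Iio 0) = 0 := by
    rw [hmeq, withDensity_apply _ measurableSet_Iio]
    exact lintegral_exponentialPDF_of_nonpos le_rfl
  have hbad : (μ.prod μ) {p : ℝ × ℝ | ¬ (0 ≤ p.1 ∧ 0 ≤ p.2)} = 0 := by
    have h1 : (μ.prod μ) (Iio 0 ×ˢ (univ : Set ℝ)) = 0 := by
      rw [Measure.prod_prod, hneg, zero_mul]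
    have h2 : (μ.prod μ) ((univ : Set ℝ) ×ˢ Iio 0) = 0 := by
      rw [Measure.prod_prod, hneg, mul_zero]
    refine measure_mono_null ?_ (measure_union_null h1 h2)
    intro p hp
    simp only [mem_setOf_eq, not_and_or, not_le] at hp
    simp only [mem_union, mem_prod, mem_Iio, mem_univ, and_true, true_and]
    tauto
  have hInt : Integrable f (μ.prod μ) := by
    refine Integrable.mono' (integrable_const 1) hfc.aestronglyMeasurable ?_
    rw [ae_iff]
    refine measure_mono_null ?_ hbad
    intro p hp
    simp only [mem_setOf_eq, not_le] at hp ⊢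
    intro ⟨h1, h2⟩
    apply absurd hp
    push_neg
    have k1 : 0 ≤ p.1 / (2*Γ) := div_nonneg h1 h2Γ.le
    have k2 : 0 ≤ (p.1 + p.2) / (2*Γ) := div_nonneg (by linarith) h2Γ.le
    rw [Real.norm_eq_abs, abs_le]
    constructor
    · have : (0:ℝ) ≤ f p := le_max_right _ _
      linarith
    · refine max_le (max_le (by linarith) (by linarith)) (by norm_num)
  -- useful division facts
  have div_half : ∀ y : ℝ, y ≤ Γ → y/(2*Γ) ≤ 1/2 := fun y hy => by
    rw [div_le_iff₀ h2Γ]; linarith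
  have div_half' : ∀ y : ℝ, Γ < y → 1/2 < y/(2*Γ) := fun y hy => by
    rw [lt_div_iff₀ h2Γ]; linarith
  have div_one' : ∀ z : ℝ, z ≤ 2*Γ → z/(2*Γ) ≤ 1 := fun z hz => by
    rw [div_le_one h2Γ]; linarith
  have div_one'' : ∀ z : ℝ, 2*Γ < z → 1 < z/(2*Γ) := fun z hz => by
    rw [lt_div_iff₀ h2Γ]; linarith
  -- the inner integral
  set g : ℝ → ℝ := fun x =>
    if x ≤ Γ then 1 - (1 - Real.exp (-(r*Γ)))/(2*Γ*r) - x/(2*Γ)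
    else if x ≤ 2*Γ then 1 - 1/(2*Γ*r) - x/(2*Γ) + Real.exp (-(r*(2*Γ-x)))/(2*Γ*r)
    else 0 with hgdef
  have inner : ∀ x : ℝ, 0 < x → (∫ y, f (x, y) ∂μ) = g x := by
    intro x hx
    rw [hμ, integral_expMeasure_eq hr]
    by_cases hxΓ : x ≤ Γ
    · -- case 0 < x ≤ Γ
      have hEq2 : EqOn (fun y => (r * Real.exp (-(r*y))) * (1/2 - x/(2*Γ)))
          (fun y => (r * Real.exp (-(r*y))) * f (x, y)) (Ioi Γ) := by
        intro y hy
        beta_reduce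
        congr 1
        have hb : 1 - (x+y)/(2*Γ) ≤ 1/2 - x/(2*Γ) := by
          rw [add_div]; have := div_half' y hy; linarith
        have ha0 : (0:ℝ) ≤ 1/2 - x/(2*Γ) := by have := div_half x hxΓ; linarith
        show 1/2 - x/(2*Γ) = max (max (1/2 - x/(2*Γ)) (1 - (x+y)/(2*Γ))) 0
        rw [max_eq_left hb, max_eq_left ha0]
      have hI1 : IntegrableOn (fun y => (r * Real.exp (-(r*y))) * f (x, y)) (Ioc 0 Γ) volume :=
        Continuous.integrableOn_Ioc (by fun_prop)
      have hI2 : IntegrableOn (fun y => (r * Real.exp (-(r*y))) * f (x, y)) (Ioi Γ) volume := by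
        refine IntegrableOn.congr_fun ?_ hEq2 measurableSet_Ioi
        simpa [neg_mul, IntegrableOn] using
          ((exp_neg_integrableOn_Ioi Γ hr).const_mul r).mul_const (1/2 - x/(2*Γ))
      rw [← Ioc_union_Ioi_eq_Ioi hΓ.le,
        setIntegral_union (Ioc_disjoint_Ioi le_rfl) measurableSet_Ioi hI1 hI2]
      have hpart1 : ∫ y in Ioc 0 Γ, (r * Real.exp (-(r*y))) * f (x, y)
          = ∫ y in (0:ℝ)..Γ, (r * Real.exp (-(r*y))) * ((1 - x/(2*Γ)) + (-(1/(2*Γ)))*y) := by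
        rw [intervalIntegral.integral_of_le hΓ.le]
        refine setIntegral_congr_fun measurableSet_Ioc (fun y hy => ?_)
        beta_reduce
        congr 1
        have h1 : 1/2 - x/(2*Γ) ≤ 1 - (x+y)/(2*Γ) := by
          rw [add_div]; have := div_half y hy.2; linarith
        have h2 : (0:ℝ) ≤ 1 - (x+y)/(2*Γ) := by
          have := div_one' (x+y) (by linarith [hy.2]); linarith
        show max (max (1/2 - x/(2*Γ)) (1 - (x+y)/(2*Γ))) 0 = _
        rw [max_eq_right h1, max_eq_left h2, add_div]; ring
      have hpart2 : ∫ y in Ioi Γ, (r * Real.exp (-(r*y))) * f (x, y)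
          = (1/2 - x/(2*Γ)) * Real.exp (-(r*Γ)) := by
        rw [← setIntegral_congr_fun measurableSet_Ioi hEq2, integral_mul_const, tailExp hr Γ,
          mul_comm]
      rw [hpart1, hpart2, linExp hrne, hgdef]
      simp only [if_pos hxΓ, mul_zero, neg_zero, Real.exp_zero]
      field_simp
      ring
    · push_neg at hxΓ
      by_cases hx2 : x ≤ 2*Γ
      · -- case Γ < x ≤ 2Γ
        have hT : (0:ℝ) ≤ 2*Γ - x := by linarith
        have hEq2 : EqOn (fun _ : ℝ => (0:ℝ))
            (fun y => (r * Real.exp (-(r*y))) * f (x, y)) (Ioi (2*Γ - x)) := by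
          intro y hy
          beta_reduce
          have hA : 1/2 - x/(2*Γ) ≤ 0 := by have := div_half' x hxΓ; linarith
          have hB : 1 - (x+y)/(2*Γ) ≤ 0 := by
            have := div_one'' (x+y) (by simp only [mem_Ioi] at hy; linarith); linarith
          have hf0 : f (x, y) = 0 := by
            show max (max (1/2 - x/(2*Γ)) (1 - (x+y)/(2*Γ))) 0 = 0
            rw [max_eq_right (max_le hA hB)]
          rw [hf0, mul_zero]
        have hI1 : IntegrableOn (fun y => (r * Real.exp (-(r*y))) * f (x, y))
            (Ioc 0 (2*Γ - x)) volume := Continuous.integrableOn_Ioc (by fun_prop)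
        have hI2 : IntegrableOn (fun y => (r * Real.exp (-(r*y))) * f (x, y))
            (Ioi (2*Γ - x)) volume :=
          IntegrableOn.congr_fun (integrableOn_zero) hEq2 measurableSet_Ioi
        rw [← Ioc_union_Ioi_eq_Ioi hT,
          setIntegral_union (Ioc_disjoint_Ioi le_rfl) measurableSet_Ioi hI1 hI2]
        have hpart1 : ∫ y in Ioc 0 (2*Γ - x), (r * Real.exp (-(r*y))) * f (x, y)
            = ∫ y in (0:ℝ)..(2*Γ - x),
                (r * Real.exp (-(r*y))) * ((1 - x/(2*Γ)) + (-(1/(2*Γ)))*y) := by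
          rw [intervalIntegral.integral_of_le hT]
          refine setIntegral_congr_fun measurableSet_Ioc (fun y hy => ?_)
          beta_reduce
          congr 1
          have h1 : 1/2 - x/(2*Γ) ≤ 1 - (x+y)/(2*Γ) := by
            rw [add_div]; have := div_half y (by linarith [hy.2]); linarith
          have h2 : (0:ℝ) ≤ 1 - (x+y)/(2*Γ) := by
            have := div_one' (x+y) (by linarith [hy.2]); linarith
          show max (max (1/2 - x/(2*Γ)) (1 - (x+y)/(2*Γ))) 0 = _
          rw [max_eq_right h1, max_eq_left h2, add_div]; ring
        have hpart2 : ∫ y in Ioi (2*Γ - x), (r * Real.exp (-(r*y))) * f (x, y) = 0 := by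
          rw [← setIntegral_congr_fun measurableSet_Ioi hEq2, integral_zero]
        rw [hpart1, hpart2, linExp hrne, hgdef]
        simp only [if_neg (not_le.mpr hxΓ), if_pos hx2, mul_zero, neg_zero, Real.exp_zero]
        field_simp
        ring
      · -- case 2Γ < x
        push_neg at hx2
        have hEq0 : EqOn (fun y => (r * Real.exp (-(r*y))) * f (x, y))
            (fun _ : ℝ => (0:ℝ)) (Ioi 0) := by
          intro y hy
          beta_reduce
          have hA : 1/2 - x/(2*Γ) ≤ 0 := by have := div_half' x hxΓ; linarith
          have hB : 1 - (x+y)/(2*Γ) ≤ 0 := by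
            have := div_one'' (x+y) (by simp only [mem_Ioi] at hy; linarith); linarith
          have hf0 : f (x, y) = 0 := by
            show max (max (1/2 - x/(2*Γ)) (1 - (x+y)/(2*Γ))) 0 = 0
            rw [max_eq_right (max_le hA hB)]
          rw [hf0, mul_zero]
        rw [setIntegral_congr_fun measurableSet_Ioi hEq0, integral_zero, hgdef]
        simp only [if_neg (not_le.mpr hxΓ), if_neg (not_le.mpr hx2)]
  -- outer
  rw [MeasureTheory.integral_prod _ hInt, hμ, integral_expMeasure_eq hr]
  rw [setIntegral_congr_fun measurableSet_Ioi
    (fun x hx => by beta_reduce; rw [inner x hx] :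
      EqOn (fun x => (r * Real.exp (-(r*x))) * ∫ y, f (x, y) ∂μ)
        (fun x => (r * Real.exp (-(r*x))) * g x) (Ioi 0))]
  have hΓ2 : Γ ≤ 2*Γ := by linarith
  have hEqA : EqOn (fun x => (r * Real.exp (-(r*x))) * g x)
      (fun x => (r * Real.exp (-(r*x)))
        * ((1 - (1 - Real.exp (-(r*Γ)))/(2*Γ*r)) + (-(1/(2*Γ)))*x)) (Ioc 0 Γ) := by
    intro x hx
    beta_reduce
    rw [hgdef]
    simp only [if_pos hx.2]
    ring
  have hEqB : EqOn (fun x => (r * Real.exp (-(r*x))) * g x)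
      (fun x => (r * Real.exp (-(r*x))) * ((1 - 1/(2*Γ*r)) + (-(1/(2*Γ)))*x)
        + Real.exp (-(r*(2*Γ)))/(2*Γ)) (Ioc Γ (2*Γ)) := by
    intro x hx
    beta_reduce
    rw [hgdef]
    simp only [if_neg (not_le.mpr hx.1), if_pos hx.2]
    have hmul : Real.exp (-(r*x)) * Real.exp (-(r*(2*Γ-x))) = Real.exp (-(r*(2*Γ))) := by
      rw [← Real.exp_add]; ring_nf
    have hrr : r/(2*Γ*r) = 1/(2*Γ) := by
      field_simp
    calc r * Real.exp (-(r*x)) * (1 - 1/(2*Γ*r) - x/(2*Γ) + Real.exp (-(r*(2*Γ-x)))/(2*Γ*r))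
        = r * Real.exp (-(r*x)) * ((1 - 1/(2*Γ*r)) + (-(1/(2*Γ)))*x)
          + (Real.exp (-(r*x)) * Real.exp (-(r*(2*Γ-x)))) * (r/(2*Γ*r)) := by ring
      _ = r * Real.exp (-(r*x)) * ((1 - 1/(2*Γ*r)) + (-(1/(2*Γ)))*x)
          + Real.exp (-(r*(2*Γ)))/(2*Γ) := by rw [hmul, hrr]; ring
  have hEqC : EqOn (fun x => (r * Real.exp (-(r*x))) * g x)
      (fun _ : ℝ => (0:ℝ)) (Ioi (2*Γ)) := by
    intro x hx
    beta_reduce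
    rw [hgdef]
    simp only [mem_Ioi] at hx
    simp only [if_neg (not_le.mpr (lt_of_le_of_lt hΓ2 hx)), if_neg (not_le.mpr hx), mul_zero]
  have hIA : IntegrableOn (fun x => (r * Real.exp (-(r*x))) * g x) (Ioc 0 Γ) volume :=
    IntegrableOn.congr_fun (Continuous.integrableOn_Ioc (by fun_prop))
      (fun x hx => (hEqA hx).symm) measurableSet_Ioc
  have hIB : IntegrableOn (fun x => (r * Real.exp (-(r*x))) * g x) (Ioc Γ (2*Γ)) volume :=
    IntegrableOn.congr_fun (Continuous.integrableOn_Ioc (by fun_prop))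
      (fun x hx => (hEqB hx).symm) measurableSet_Ioc
  have hIC : IntegrableOn (fun x => (r * Real.exp (-(r*x))) * g x) (Ioi (2*Γ)) volume :=
    IntegrableOn.congr_fun integrableOn_zero (fun x hx => (hEqC hx).symm) measurableSet_Ioi
  have hIBC : IntegrableOn (fun x => (r * Real.exp (-(r*x))) * g x) (Ioi Γ) volume := by
    rw [← Ioc_union_Ioi_eq_Ioi hΓ2]; exact hIB.union hIC
  rw [← Ioc_union_Ioi_eq_Ioi hΓ.le,
    setIntegral_union (Ioc_disjoint_Ioi le_rfl) measurableSet_Ioi hIA hIBC,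
    ← Ioc_union_Ioi_eq_Ioi hΓ2,
    setIntegral_union (Ioc_disjoint_Ioi le_rfl) measurableSet_Ioi hIB hIC]
  have hPA : ∫ x in Ioc 0 Γ, (r * Real.exp (-(r*x))) * g x
      = ∫ x in (0:ℝ)..Γ, (r * Real.exp (-(r*x)))
          * ((1 - (1 - Real.exp (-(r*Γ)))/(2*Γ*r)) + (-(1/(2*Γ)))*x) := by
    rw [intervalIntegral.integral_of_le hΓ.le]
    exact setIntegral_congr_fun measurableSet_Ioc hEqA
  have hPB : ∫ x in Ioc Γ (2*Γ), (r * Real.exp (-(r*x))) * g x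
      = (∫ x in Γ..(2*Γ), (r * Real.exp (-(r*x))) * ((1 - 1/(2*Γ*r)) + (-(1/(2*Γ)))*x))
        + (2*Γ - Γ) * (Real.exp (-(r*(2*Γ)))/(2*Γ)) := by
    rw [setIntegral_congr_fun measurableSet_Ioc hEqB,
      ← intervalIntegral.integral_of_le hΓ2,
      intervalIntegral.integral_add
        ((by fun_prop : Continuous fun x => (r * Real.exp (-(r*x))) * ((1 - 1/(2*Γ*r)) + (-(1/(2*Γ)))*x)).intervalIntegrable Γ (2*Γ))
        (intervalIntegrable_const),
      intervalIntegral.integral_const, smul_eq_mul]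
  have hPC : ∫ x in Ioi (2*Γ), (r * Real.exp (-(r*x))) * g x = 0 := by
    rw [setIntegral_congr_fun measurableSet_Ioi hEqC, integral_zero]
  rw [hPA, hPB, hPC, linExp hrne, linExp hrne]
  have he1 : Real.exp (-(Γ/Ebar)) = Real.exp (-(r*Γ)) := by
    congr 1; rw [hrdef]; ring
  have he2 : Real.exp (-(2*Γ/Ebar)) = Real.exp (-(r*(2*Γ))) := by
    congr 1; rw [hrdef]; ring
  have hE2 : Real.exp (-(r*(2*Γ))) = Real.exp (-(r*Γ)) * Real.exp (-(r*Γ)) := by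
    rw [← Real.exp_add]; ring_nf
  rw [he1, he2, hE2, hrdef]
  simp only [mul_zero, neg_zero, Real.exp_zero]
  field_simp
  ring
end

section
/- Let E₁,…,E_M be i.i.d. nonnegative integrable random variables with mean Ē, finite variance σ², and Γ > 0. Define f_n(M) = (n/M)(1 - (∑_{i=1}^n E_i)/(nΓ)) and P_es(M) = E[max(0, max_{1≤n≤M} f_n(M))]. Then P_es(M) → max(0, 1 - Ē/Γ) as M → ∞. -/
open MeasureTheory ProbabilityTheory Real Filter Set Topology

/-- Deterministic lemma: if `a n / n → c` then `(max_{1≤n≤M} a n ⊔ 0)/M → max 0 c`. -/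
lemma detA (a : ℕ → ℝ) (c : ℝ) (h : Tendsto (fun n : ℕ => a n / n) atTop (𝓝 c)) :
    Tendsto (fun M : ℕ => ((Finset.Icc 1 M).fold max 0 a) / M) atTop (𝓝 (max 0 c)) := by
  rw [tendsto_order]
  constructor
  · intro b hb
    have hlow : Tendsto (fun M : ℕ => max 0 (a M / M)) atTop (𝓝 (max 0 c)) :=
      tendsto_const_nhds.max h
    filter_upwards [hlow.eventually (eventually_gt_nhds hb), eventually_ge_atTop 1]
      with M hM hM1
    refine lt_of_lt_of_le hM ?_
    have hMpos : (0:ℝ) < M := by exact_mod_cast hM1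
    apply max_le
    · apply div_nonneg _ hMpos.le
      exact (Finset.le_fold_max _).2 (Or.inl le_rfl)
    · apply div_le_div_of_nonneg_right ?_ hMpos.le
      exact (Finset.le_fold_max _).2 (Or.inr ⟨M, Finset.mem_Icc.2 ⟨hM1, le_rfl⟩, le_rfl⟩)
  · intro b hb
    set L := max 0 c with hL
    have hLnn : 0 ≤ L := le_max_left _ _
    set ε := b - L with hε
    have hεpos : 0 < ε := by simp [hε]; linarith
    have h2 : ∀ᶠ n : ℕ in atTop, a n / n < L + ε / 2 := by
      refine h.eventually (eventually_lt_nhds ?_)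
      have : c ≤ L := le_max_right _ _
      linarith
    obtain ⟨N, hN⟩ := (h2.and (eventually_ge_atTop 1)).exists_forall_of_atTop
    set B := max ((Finset.Icc 1 N).fold max 0 a) 0 with hB
    have hBnn : 0 ≤ B := le_max_right _ _
    have h3 : ∀ᶠ M : ℕ in atTop, B ≤ (ε / 2) * M := by
      have : Tendsto (fun M : ℕ => (ε / 2) * M) atTop atTop := by
        apply Tendsto.const_mul_atTop (by linarith)
        exact tendsto_natCast_atTop_atTop
      exact this.eventually_ge_atTop B
    filter_upwards [h3, eventually_ge_atTop (max N 1)] with M hM3 hMN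
    have hM1 : 1 ≤ M := le_trans (le_max_right _ _) hMN
    have hMN' : N ≤ M := le_trans (le_max_left _ _) hMN
    have hMpos : (0:ℝ) < M := by exact_mod_cast hM1
    rw [div_lt_iff₀ hMpos]
    have key : (Finset.Icc 1 M).fold max 0 a ≤ (L + ε / 2) * M := by
      apply (Finset.fold_max_le _).2
      constructor
      · positivity
      · intro n hn
        rw [Finset.mem_Icc] at hn
        have hnpos : (0:ℝ) < n := by exact_mod_cast hn.1
        have hnM : (n:ℝ) ≤ M := by exact_mod_cast hn.2
        by_cases hcase : N ≤ n
        · have := (hN n hcase).1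
          rw [div_lt_iff₀ hnpos] at this
          calc a n ≤ (L + ε / 2) * n := this.le
            _ ≤ (L + ε / 2) * M := by
                apply mul_le_mul_of_nonneg_left hnM; positivity
        · have han : a n ≤ B := by
            refine le_trans ?_ (le_max_left _ _)
            exact (Finset.le_fold_max _).2
              (Or.inr ⟨n, Finset.mem_Icc.2 ⟨hn.1, le_of_not_ge hcase⟩, le_rfl⟩)
          calc a n ≤ B := han
            _ ≤ (ε / 2) * M := hM3
            _ ≤ (L + ε / 2) * M := by
                apply mul_le_mul_of_nonneg_right _ hMpos.le; linarith
    calc (Finset.Icc 1 M).fold max 0 a ≤ (L + ε / 2) * M := key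
      _ < b * M := by
          apply mul_lt_mul_of_pos_right _ hMpos
          simp only [hε] at *; linarith

lemma measFold {Ω : Type*} [MeasurableSpace Ω] (s : Finset ℕ) (F : ℕ → Ω → ℝ)
    (h : ∀ n, Measurable (F n)) :
    Measurable fun ω => s.fold max (0:ℝ) (fun n => F n ω) := by
  classical
  induction s using Finset.induction with
  | empty => simpa using measurable_const
  | insert _ _ hx ih =>
      simp only [Finset.fold_insert hx]
      exact (h _).max ih

/-- Theorem 1 (asymptotic ESP): for i.i.d. nonnegative `E_i` with mean `Ē`, finite
variance `σ²` and `Γ > 0`, the `M`-epoch energy shortage probability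
`P_es(M) = E[max(0, max_{1≤n≤M} (n/M)(1 - ∑_{i=1}^n E_i/(nΓ)))]`
converges to `max(0, 1 - Ē/Γ)` as `M → ∞`. -/
theorem stmt4 {Ω : Type*} [MeasurableSpace Ω] (μ : Measure Ω) [IsProbabilityMeasure μ]
    (E : ℕ → Ω → ℝ) (hmeas : ∀ i, Measurable (E i))
    (hnonneg : ∀ i ω, 0 ≤ E i ω)
    (hL2 : ∀ i, MemLp (E i) 2 μ)
    (hindep : iIndepFun E μ)
    (hident : ∀ i, μ.map (E i) = μ.map (E 1))
    (Ebar σ2 Γ : ℝ) (hmean : (∫ ω, E 1 ω ∂μ) = Ebar)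
    (hvar : variance (E 1) μ = σ2) (hΓ : 0 < Γ) :
    Tendsto (fun M : ℕ =>
        ∫ ω, (Finset.Icc 1 M).fold max 0
          (fun n : ℕ => ((n : ℝ) / (M : ℝ)) * (1 - (∑ i ∈ Finset.Icc 1 n, E i ω) / ((n : ℝ) * Γ))) ∂μ)
      atTop (nhds (max 0 (1 - Ebar / Γ))) := by
  classical
  set X : ℕ → Ω → ℝ := fun i => E (1 + i) with hX
  have hXint : Integrable (X 0) μ := (hL2 1).integrable (by norm_num)
  have hXindep : Pairwise (Function.onFun (IndepFun · · μ) X) := by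
    intro i j hij
    exact hindep.indepFun (by omega)
  have hXident : ∀ i, IdentDistrib (X i) (X 0) μ μ := by
    intro i
    exact ⟨(hmeas _).aemeasurable, (hmeas _).aemeasurable, by
      simp only [hX]; rw [hident (1 + i), hident 1]⟩
  have hslln := strong_law_ae_real X hXint hXindep hXident
  have hmean' : (μ[X 0]) = Ebar := by simpa [hX] using hmean
  rw [hmean'] at hslln
  -- sums over Icc equal sums over range of X
  have hsum : ∀ (n : ℕ) (ω : Ω),
      (∑ i ∈ Finset.Icc 1 n, E i ω) = ∑ i ∈ Finset.range n, X i ω := by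
    intro n ω
    rw [show Finset.Icc 1 n = Finset.Ico 1 (n + 1) by
      rw [Finset.Ico_add_one_right_eq_Icc], Finset.sum_Ico_eq_sum_range]
    simp [hX]
  -- the a.e. limit
  have h_lim : ∀ᵐ ω ∂μ, Tendsto (fun M : ℕ =>
      (Finset.Icc 1 M).fold max 0
        (fun n : ℕ => ((n : ℝ) / (M : ℝ)) * (1 - (∑ i ∈ Finset.Icc 1 n, E i ω) / ((n : ℝ) * Γ))))
      atTop (𝓝 (max 0 (1 - Ebar / Γ))) := by
    filter_upwards [hslln] with ω hω
    set a : ℕ → ℝ := fun n => n - (∑ i ∈ Finset.Icc 1 n, E i ω) / Γ with ha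
    have ha' : Tendsto (fun n : ℕ => a n / n) atTop (𝓝 (1 - Ebar / Γ)) := by
      have h1 : Tendsto (fun n : ℕ => 1 - ((∑ i ∈ Finset.range n, X i ω) / n) / Γ) atTop
          (𝓝 (1 - Ebar / Γ)) := (tendsto_const_nhds.sub (hω.div_const Γ))
      apply h1.congr'
      filter_upwards [eventually_ge_atTop 1] with n hn
      have hnpos : (0:ℝ) < n := by exact_mod_cast hn
      have hΓ0 : Γ ≠ 0 := hΓ.ne'
      have hn0 : (n:ℝ) ≠ 0 := hnpos.ne'
      rw [ha]
      simp only
      rw [hsum n ω]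
      field_simp
    have := detA a (1 - Ebar / Γ) ha'
    apply this.congr'
    filter_upwards [eventually_ge_atTop 1] with M hM
    have hMpos : (0:ℝ) < M := by exact_mod_cast hM
    have hm : ∀ x y : ℝ, max x y / (M:ℝ) = max (x / M) (y / M) := fun x y =>
      (max_div_div_right hMpos.le x y).symm
    have hfold := Finset.fold_hom (s := Finset.Icc 1 M) (op := fun x y : ℝ => max x y)
      (b := (0:ℝ)) (f := a) (m := fun x : ℝ => x / M) (op' := fun x y : ℝ => max x y) hm
    rw [← hfold, zero_div]
    apply Finset.fold_congr
    intro n hn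
    rw [Finset.mem_Icc] at hn
    have hnpos : (0:ℝ) < n := by exact_mod_cast hn.1
    have hΓ0 : Γ ≠ 0 := hΓ.ne'
    have hn0 : (n:ℝ) ≠ 0 := hnpos.ne'
    have hM0 : (M:ℝ) ≠ 0 := hMpos.ne'
    rw [ha]
    simp only
    field_simp
  -- dominated convergence
  have hconv := tendsto_integral_of_dominated_convergence (μ := μ)
    (F := fun M ω => (Finset.Icc 1 M).fold max 0
      (fun n : ℕ => ((n : ℝ) / (M : ℝ)) * (1 - (∑ i ∈ Finset.Icc 1 n, E i ω) / ((n : ℝ) * Γ))))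
    (f := fun _ => max 0 (1 - Ebar / Γ)) (fun _ => 1)
    (by
      intro M
      apply Measurable.aestronglyMeasurable
      apply measFold
      intro n
      exact (measurable_const.sub ((Finset.measurable_sum _ (fun i _ => hmeas i)).div_const
        _)).const_mul _)
    (integrable_const 1)
    (by
      intro M
      refine ae_of_all _ fun ω => ?_
      rw [Real.norm_eq_abs, abs_le]
      constructor
      · have h0 : (0:ℝ) ≤ (Finset.Icc 1 M).fold max 0
            (fun n : ℕ => ((n : ℝ) / (M : ℝ)) * (1 - (∑ i ∈ Finset.Icc 1 n, E i ω) / ((n : ℝ) * Γ))) :=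
          (Finset.le_fold_max _).2 (Or.inl le_rfl)
        linarith
      · apply (Finset.fold_max_le _).2
        refine ⟨by norm_num, fun n hn => ?_⟩
        rw [Finset.mem_Icc] at hn
        have hn1 : 1 ≤ M := le_trans hn.1 hn.2
        have hMpos : (0:ℝ) < M := by exact_mod_cast hn1
        have hnM : (n:ℝ) ≤ M := by exact_mod_cast hn.2
        have hnn : (0:ℝ) ≤ n := Nat.cast_nonneg n
        have hS : 0 ≤ (∑ i ∈ Finset.Icc 1 n, E i ω) :=
          Finset.sum_nonneg fun i _ => hnonneg i ω
        have h1 : 1 - (∑ i ∈ Finset.Icc 1 n, E i ω) / ((n : ℝ) * Γ) ≤ 1 := by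
          have : 0 ≤ (∑ i ∈ Finset.Icc 1 n, E i ω) / ((n : ℝ) * Γ) := by positivity
          linarith
        calc ((n : ℝ) / (M : ℝ)) * (1 - (∑ i ∈ Finset.Icc 1 n, E i ω) / ((n : ℝ) * Γ))
            ≤ ((n : ℝ) / (M : ℝ)) * 1 := by
              apply mul_le_mul_of_nonneg_left h1; positivity
          _ ≤ 1 := by rw [mul_one, div_le_one hMpos]; exact hnM)
    h_lim
  simpa using hconv
end

section
/- Let P(M) = E[max(0, max_{1≤n≤M} (n/M)(1 - ∑_{i=1}^n E_{i-1}/(nΓ)))] for i.i.d. nonnegative E_i with continuous distribution and mean Ē. Then for any positive integers M₁, M₂ with M = M₁ + M₂: P(M) ≤ (M₁/M)·P(M₁) + (M₂/M)·P(M₂). -/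
open MeasureTheory ProbabilityTheory Real Filter Set

namespace Stmt10Aux

variable {Ω : Type*} [MeasurableSpace Ω] {μ : MeasureTheory.Measure Ω}

lemma fold_integrable {s : Finset ℕ} {f : ℕ → Ω → ℝ}
    (hf : ∀ n ∈ s, Integrable (f n) μ) :
    Integrable (fun ω => s.fold max 0 (fun n => f n ω)) μ := by
  induction s using Finset.cons_induction with
  | empty => simpa using integrable_const (0 : ℝ)
  | cons a s ha ih =>
    simp only [Finset.fold_cons]
    have h1 := hf a (Finset.mem_cons_self a s)
    have h2 := ih fun n hn => hf n (Finset.mem_cons_of_mem hn)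
    simpa [Pi.sup_def] using h1.sup h2

lemma fold_measurable {α : Type*} [MeasurableSpace α] {s : Finset ℕ} {f : ℕ → α → ℝ}
    (hf : ∀ n ∈ s, Measurable (f n)) :
    Measurable (fun x => s.fold max 0 (fun n => f n x)) := by
  induction s using Finset.cons_induction with
  | empty => simpa using measurable_const
  | cons a s ha ih =>
    simp only [Finset.fold_cons]
    exact (hf a (Finset.mem_cons_self a s)).max
      (ih fun n hn => hf n (Finset.mem_cons_of_mem hn))

lemma fold_div (s : Finset ℕ) (f : ℕ → ℝ) {c : ℝ} (hc : 0 ≤ c) :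
    s.fold max 0 (fun n => f n / c) = s.fold max 0 f / c := by
  have h := Finset.fold_hom (s := s) (b := (0 : ℝ)) (f := f) (op := max) (op' := max)
    (m := fun x : ℝ => x / c) (fun x y => (max_div_div_right hc x y).symm)
  simpa using h

private def tset {k : ℕ} (c : ℕ) (s : Fin k → Set ℝ) : ℕ → Set ℝ :=
  fun j => if h : j - c < k then s ⟨j - c, h⟩ else Set.univ

private lemma tset_apply {k : ℕ} (c : ℕ) (s : Fin k → Set ℝ) (i : ℕ) (hi : i < k) :
    tset c s (c + i) = s ⟨i, hi⟩ := by
  unfold tset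
  simp only [Nat.add_sub_cancel_left]
  rw [dif_pos hi]

private lemma tset_meas {k c : ℕ} {s : Fin k → Set ℝ} (hs : ∀ i, MeasurableSet (s i)) (j : ℕ) :
    MeasurableSet (tset c s j) := by
  unfold tset
  split_ifs
  · exact hs _
  · exact MeasurableSet.univ

lemma law_shift [IsProbabilityMeasure μ] {E : ℕ → Ω → ℝ} (hmeas : ∀ i, Measurable (E i))
    (hindep : iIndepFun E μ)
    (hident : ∀ i, μ.map (E i) = μ.map (E 0))
    (c k : ℕ) :
    μ.map (fun ω (i : Fin k) => E (c + i) ω) = Measure.pi fun _ : Fin k => μ.map (E 0) := by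
  classical
  have hprob : IsProbabilityMeasure (μ.map (E 0)) :=
    Measure.isProbabilityMeasure_map (hmeas 0).aemeasurable
  refine (Measure.pi_eq fun s hs => ?_).symm
  have hmeasY : Measurable (fun ω (i : Fin k) => E (c + i) ω) :=
    measurable_pi_lambda _ fun i => hmeas _
  rw [Measure.map_apply hmeasY (MeasurableSet.univ_pi hs)]
  have hpre : (fun ω (i : Fin k) => E (c + i) ω) ⁻¹' (Set.pi Set.univ s)
      = ⋂ j ∈ Finset.image (fun i : ℕ => c + i) (Finset.range k), E j ⁻¹' tset c s j := by
    rw [Finset.set_biInter_finset_image]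
    ext ω
    simp only [Set.mem_preimage, Set.mem_univ_pi, Set.mem_iInter, Finset.mem_range]
    constructor
    · intro h i hi
      rw [tset_apply c s i hi]
      exact h ⟨i, hi⟩
    · intro h i
      have h2 := h i i.isLt
      rw [tset_apply c s i i.isLt, Fin.eta] at h2
      exact h2
  rw [hpre]
  rw [hindep.measure_inter_preimage_eq_mul _ (sets := tset c s)
      (fun j _ => tset_meas hs j)]
  have hinj : Set.InjOn (fun i : ℕ => c + i) (Finset.range k) := by
    intro a _ b _ hab
    have : c + a = c + b := hab
    omega
  rw [Finset.prod_image hinj, ← Fin.prod_univ_eq_prod_range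
      (fun i : ℕ => μ (E (c + i) ⁻¹' tset c s (c + i))) k]
  refine Finset.prod_congr rfl fun i _ => ?_
  rw [tset_apply c s i i.isLt, Fin.eta, ← Measure.map_apply (hmeas _) (hs i), hident]

end Stmt10Aux
/-- Weighted subadditivity of the energy shortage probability
`P(M) = E[max(0, max_{1≤n≤M} (n/M)(1 - ∑_{i=1}^n E_{i-1}/(nΓ)))]` for i.i.d.
nonnegative `E_i` with continuous distribution:
`P(M₁+M₂) ≤ (M₁/M)·P(M₁) + (M₂/M)·P(M₂)`. -/
theorem stmt10 {Ω : Type*} [MeasurableSpace Ω] (μ : Measure Ω) [IsProbabilityMeasure μ]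
    (E : ℕ → Ω → ℝ) (hmeas : ∀ i, Measurable (E i))
    (hnonneg : ∀ i ω, 0 ≤ E i ω) (hint : ∀ i, Integrable (E i) μ)
    (hindep : iIndepFun E μ)
    (hident : ∀ i, μ.map (E i) = μ.map (E 0))
    (hcont : ∀ x : ℝ, μ.map (E 0) {x} = 0)
    (Γ : ℝ) (hΓ : 0 < Γ)
    (P : ℕ → ℝ)
    (hP : ∀ m : ℕ, P m = ∫ ω, (Finset.Icc 1 m).fold max 0
      (fun n : ℕ => ((n : ℝ) / (m : ℝ)) * (1 - (∑ i ∈ Finset.range n, E i ω) / ((n : ℝ) * Γ))) ∂μ)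
    (M₁ M₂ : ℕ) (h1 : 0 < M₁) (h2 : 0 < M₂) :
    P (M₁ + M₂) ≤ ((M₁ : ℝ) / (M₁ + M₂)) * P M₁ + ((M₂ : ℝ) / (M₁ + M₂)) * P M₂ := by
  classical
  set M := M₁ + M₂ with hMdef
  have hM0 : 0 < M := by omega
  set G : ℕ → Ω → ℝ := fun n ω => (n : ℝ) - (∑ i ∈ Finset.range n, E i ω) / Γ with hGdef
  have hGint : ∀ n, Integrable (G n) μ := fun n =>
    (integrable_const _).sub ((integrable_finset_sum _ fun i _ => hint i).div_const Γ)
  -- Rewrite each P m as (∫ fold of G) / m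
  have hPm : ∀ m : ℕ, 0 < m →
      P m = (∫ ω, (Finset.Icc 1 m).fold max 0 (fun n => G n ω) ∂μ) / m := by
    intro m hm
    have hmR : (0 : ℝ) < (m : ℝ) := Nat.cast_pos.mpr hm
    rw [hP m, ← integral_div]
    refine integral_congr_ae (Filter.Eventually.of_forall fun ω => ?_)
    dsimp only
    rw [← Stmt10Aux.fold_div _ _ hmR.le]
    refine Finset.fold_congr fun n hn => ?_
    obtain ⟨hn1, _⟩ := Finset.mem_Icc.mp hn
    have hnR : (0 : ℝ) < (n : ℝ) := Nat.cast_pos.mpr hn1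
    simp only [hGdef]
    field_simp
  -- A and B
  set A : Ω → ℝ := fun ω => (Finset.Icc 1 M₁).fold max 0 (fun n => G n ω) with hAdef
  set B : Ω → ℝ := fun ω =>
    (Finset.Icc 1 M₂).fold max 0 (fun n => G (M₁ + n) ω - G M₁ ω) with hBdef
  have hAint : Integrable A μ := Stmt10Aux.fold_integrable fun n _ => hGint n
  have hBint : Integrable B μ := Stmt10Aux.fold_integrable fun n _ => (hGint _).sub (hGint _)
  have hMint : Integrable (fun ω => (Finset.Icc 1 M).fold max 0 (fun n => G n ω)) μ :=
    Stmt10Aux.fold_integrable fun n _ => hGint n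
  have hA0 : ∀ ω, 0 ≤ A ω := fun ω => (Finset.le_fold_max _).mpr (Or.inl le_rfl)
  have hB0 : ∀ ω, 0 ≤ B ω := fun ω => (Finset.le_fold_max _).mpr (Or.inl le_rfl)
  -- Pointwise subadditivity
  have hpoint : ∀ ω, (Finset.Icc 1 M).fold max 0 (fun n => G n ω) ≤ A ω + B ω := by
    intro ω
    rw [Finset.fold_max_le]
    refine ⟨add_nonneg (hA0 ω) (hB0 ω), fun n hn => ?_⟩
    obtain ⟨hn1, hnM⟩ := Finset.mem_Icc.mp hn
    by_cases hc : n ≤ M₁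
    · have hle : G n ω ≤ A ω :=
        (Finset.le_fold_max _).mpr (Or.inr ⟨n, Finset.mem_Icc.mpr ⟨hn1, hc⟩, le_rfl⟩)
      linarith [hB0 ω]
    · push_neg at hc
      have hGM₁ : G M₁ ω ≤ A ω :=
        (Finset.le_fold_max _).mpr (Or.inr ⟨M₁, Finset.mem_Icc.mpr ⟨h1, le_rfl⟩, le_rfl⟩)
      have hmem : n - M₁ ∈ Finset.Icc 1 M₂ := Finset.mem_Icc.mpr ⟨by omega, by omega⟩
      have hdiff : G (M₁ + (n - M₁)) ω - G M₁ ω ≤ B ω :=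
        (Finset.le_fold_max _).mpr (Or.inr ⟨n - M₁, hmem, le_rfl⟩)
      rw [Nat.add_sub_cancel' hc.le] at hdiff
      linarith
  have hle : ∫ ω, (Finset.Icc 1 M).fold max 0 (fun n => G n ω) ∂μ
      ≤ (∫ ω, A ω ∂μ) + ∫ ω, B ω ∂μ := by
    rw [← integral_add hAint hBint]
    exact integral_mono hMint (hAint.add hBint) hpoint
  -- ∫ B equals ∫ of the M₂-fold of G, by identical distribution of shifted blocks
  have hBeq : ∫ ω, B ω ∂μ = ∫ ω, (Finset.Icc 1 M₂).fold max 0 (fun n => G n ω) ∂μ := by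
    set Φ : (Fin M₂ → ℝ) → ℝ := fun x => (Finset.Icc 1 M₂).fold max 0
      (fun n : ℕ => (n : ℝ) -
        (∑ i ∈ Finset.range n, (if h : i < M₂ then x ⟨i, h⟩ else 0)) / Γ) with hΦdef
    have hΦmeas : Measurable Φ := by
      rw [hΦdef]
      refine Stmt10Aux.fold_measurable fun n _ => ?_
      refine measurable_const.sub (Measurable.div_const ?_ Γ)
      exact Finset.measurable_sum _ fun i _ => by
        split_ifs with h
        · exact measurable_pi_apply _
        · exact measurable_const
    have hcomp : ∀ (c : ℕ) (ω : Ω),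
        Φ (fun i : Fin M₂ => E (c + i) ω) = (Finset.Icc 1 M₂).fold max 0
          (fun n => G (c + n) ω - G c ω) := by
      intro c ω
      rw [hΦdef]
      refine Finset.fold_congr fun n hn => ?_
      obtain ⟨_, hn2⟩ := Finset.mem_Icc.mp hn
      have hsum : (∑ i ∈ Finset.range n,
          (if h : i < M₂ then E (c + (⟨i, h⟩ : Fin M₂)) ω else 0))
          = ∑ i ∈ Finset.range n, E (c + i) ω := by
        refine Finset.sum_congr rfl fun i hi => ?_
        rw [dif_pos (lt_of_lt_of_le (Finset.mem_range.mp hi) hn2)]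
      rw [hsum]
      simp only [hGdef]
      rw [Finset.sum_range_add]
      push_cast
      ring
    have hY : ∀ c : ℕ, Measurable (fun ω (i : Fin M₂) => E (c + i) ω) := fun c =>
      measurable_pi_lambda _ fun i => hmeas _
    have law₁ := Stmt10Aux.law_shift (μ := μ) hmeas hindep hident M₁ M₂
    have law₀ := Stmt10Aux.law_shift (μ := μ) hmeas hindep hident 0 M₂
    calc ∫ ω, B ω ∂μ = ∫ ω, Φ (fun i : Fin M₂ => E (M₁ + i) ω) ∂μ := by
          refine integral_congr_ae (Filter.Eventually.of_forall fun ω => ?_)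
          exact (hcomp M₁ ω).symm
      _ = ∫ x, Φ x ∂(μ.map (fun ω (i : Fin M₂) => E (M₁ + i) ω)) :=
          (integral_map (hY M₁).aemeasurable hΦmeas.aestronglyMeasurable).symm
      _ = ∫ x, Φ x ∂(μ.map (fun ω (i : Fin M₂) => E (0 + i) ω)) := by
          rw [law₁, law₀]
      _ = ∫ ω, Φ (fun i : Fin M₂ => E (0 + i) ω) ∂μ :=
          integral_map (hY 0).aemeasurable hΦmeas.aestronglyMeasurable
      _ = ∫ ω, (Finset.Icc 1 M₂).fold max 0 (fun n => G n ω) ∂μ := by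
          refine integral_congr_ae (Filter.Eventually.of_forall fun ω => ?_)
          dsimp only
          rw [hcomp 0 ω]
          refine Finset.fold_congr fun n _ => ?_
          simp [hGdef]
  -- Put it together
  rw [hBeq] at hle
  rw [hPm M hM0, hPm M₁ h1, hPm M₂ h2]
  have e1 : (∫ ω, (Finset.Icc 1 M₁).fold max 0 (fun n => G n ω) ∂μ) = ∫ ω, A ω ∂μ := rfl
  rw [e1]
  have hcastM : ((M : ℕ) : ℝ) = (M₁ : ℝ) + (M₂ : ℝ) := by rw [hMdef]; push_cast; ring
  rw [hcastM]
  have hM₁R : (0 : ℝ) < (M₁ : ℝ) := Nat.cast_pos.mpr h1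
  have hM₂R : (0 : ℝ) < (M₂ : ℝ) := Nat.cast_pos.mpr h2
  have hsum_pos : (0 : ℝ) < (M₁ : ℝ) + (M₂ : ℝ) := by positivity
  calc (∫ ω, (Finset.Icc 1 M).fold max 0 (fun n => G n ω) ∂μ) / ((M₁ : ℝ) + (M₂ : ℝ))
      ≤ ((∫ ω, A ω ∂μ) + ∫ ω, (Finset.Icc 1 M₂).fold max 0 (fun n => G n ω) ∂μ)
        / ((M₁ : ℝ) + (M₂ : ℝ)) := by gcongr
    _ = ((M₁ : ℝ) / ((M₁ : ℝ) + (M₂ : ℝ))) * ((∫ ω, A ω ∂μ) / (M₁ : ℝ))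
        + ((M₂ : ℝ) / ((M₁ : ℝ) + (M₂ : ℝ)))
          * ((∫ ω, (Finset.Icc 1 M₂).fold max 0 (fun n => G n ω) ∂μ) / (M₂ : ℝ)) := by
        field_simp
end

section
/- For the Shannon power-rate function g(R) = 2^{2R} - 1 and P̄ > 0, the function h(R) = R(2^{2R₀}-1)/(2^{2R}-1) with R₀ = (1/2)log₂(1+P̄) is strictly decreasing on (R₀, ∞), and h(R) < R₀ for all R > R₀. -/
open Real Set

lemma core_ineq {a b : ℝ} (ha : 0 < a) (hab : a < b) :
    b * ((2 : ℝ) ^ (2 * a) - 1) < a * ((2 : ℝ) ^ (2 * b) - 1) := by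
  have hb : 0 < b := ha.trans hab
  have h2a : (2 : ℝ) ^ (2 * a) = Real.exp (2 * a * Real.log 2) := by
    rw [Real.rpow_def_of_pos (by norm_num)]; ring_nf
  have h2b : (2 : ℝ) ^ (2 * b) = Real.exp (2 * b * Real.log 2) := by
    rw [Real.rpow_def_of_pos (by norm_num)]; ring_nf
  have hc : (0 : ℝ) < 2 * Real.log 2 := by positivity
  have key := strictConvexOn_exp.secant_strict_mono (a := 0)
    (x := 2 * a * Real.log 2) (y := 2 * b * Real.log 2)
    (mem_univ _) (mem_univ _) (mem_univ _)
    (by nlinarith) (by nlinarith) (by nlinarith)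
  rw [Real.exp_zero, sub_zero, sub_zero] at key
  rw [h2a, h2b]
  have ha' : (0:ℝ) < 2 * a * Real.log 2 := by nlinarith
  have hb' : (0:ℝ) < 2 * b * Real.log 2 := by nlinarith
  rw [div_lt_div_iff₀ ha' hb'] at key
  nlinarith [key]

lemma pow_sub_one_pos {x : ℝ} (hx : 0 < x) : 0 < (2 : ℝ) ^ (2 * x) - 1 := by
  have : (1 : ℝ) < (2 : ℝ) ^ (2 * x) :=
    Real.one_lt_rpow_iff_of_pos (by norm_num) |>.2 (Or.inl ⟨by norm_num, by linarith⟩)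
  linarith

/-- For the Shannon law and `P̄ > 0`, with `R₀ = (1/2)log₂(1+P̄)`, the asymptotic
effective rate `h(R) = R(2^{2R₀}-1)/(2^{2R}-1)` is strictly decreasing on `(R₀, ∞)`
and `h(R) < R₀` for all `R > R₀`. -/
theorem stmt18 (Pbar : ℝ) (hP : 0 < Pbar)
    (R₀ : ℝ) (hR₀ : R₀ = Real.logb 2 (1 + Pbar) / 2)
    (h : ℝ → ℝ)
    (hh : ∀ R : ℝ, h R = R * ((2 : ℝ) ^ (2 * R₀) - 1) / ((2 : ℝ) ^ (2 * R) - 1)) :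
    StrictAntiOn h (Set.Ioi R₀) ∧ ∀ R : ℝ, R₀ < R → h R < R₀ := by
  have hR₀pos : 0 < R₀ := by
    rw [hR₀]
    have := Real.logb_pos (by norm_num : (1:ℝ) < 2) (by linarith : (1:ℝ) < 1 + Pbar)
    linarith
  have hPeq : (2 : ℝ) ^ (2 * R₀) - 1 = Pbar := by
    rw [hR₀]
    have : (2:ℝ) * (Real.logb 2 (1 + Pbar) / 2) = Real.logb 2 (1 + Pbar) := by ring
    rw [this, Real.rpow_logb (by norm_num) (by norm_num) (by linarith)]
    ring
  constructor
  · intro a ha b hb hab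
    have ha' : 0 < a := hR₀pos.trans ha
    have hb' : 0 < b := hR₀pos.trans hb
    have hA := pow_sub_one_pos ha'
    have hB := pow_sub_one_pos hb'
    rw [hh a, hh b, hPeq, div_lt_div_iff₀ hB hA]
    nlinarith [core_ineq ha' hab, hP]
  · intro R hR
    have hR' : 0 < R := hR₀pos.trans hR
    have hB := pow_sub_one_pos hR'
    rw [hh R, hPeq, div_lt_iff₀ hB]
    have := core_ineq hR₀pos hR
    nlinarith [this, hPeq]
end
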